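/- arXiv:1505.07654 — 5 statements merged into one kernel-verified Lean document; each statement's English description precedes it below -/
import Mathlib

section
/- Let G be a group, H a subgroup, and S a right transversal of H in G containing the identity. Define an operation ∘ on S by letting x ∘ y be the unique element of S ∩ H x y. Then (S, ∘) has a two-sided identity (the identity of G) and for all a, b ∈ S the equation X ∘ a = b has a unique solution X in S. -/
/-- A right transversal `S` of `H` in `G` containing the identity,
with the induced operation `∘` (defined by `{x ∘ y} = S ∩ Hxy`), has a two-sided
identity and unique right division. -/
theorem stmt0 {G : Type*} [Group G] (H : Subgroup G) (S : Set G)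
    (h1 : (1 : G) ∈ S)
    (huniq : ∀ g : G, ∃! s : G, s ∈ S ∧ g * s⁻¹ ∈ H)
    (op : S → S → S)
    (hop : ∀ x y : S, ((x : G) * (y : G)) * ((op x y : G))⁻¹ ∈ H) :
    (∀ x : S, op x ⟨1, h1⟩ = x ∧ op ⟨1, h1⟩ x = x) ∧
      (∀ a b : S, ∃! X : S, op X a = b) := by
  -- key: op x y is the unique representative
  have key : ∀ (x y : S) (z : S), (x : G) * y * (z : G)⁻¹ ∈ H → op x y = z := by
    intro x y z hz
    obtain ⟨s, _, hs⟩ := huniq ((x : G) * y)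
    have h1' := hs (op x y) ⟨(op x y).2, hop x y⟩
    have h2' := hs z ⟨z.2, hz⟩
    exact Subtype.ext (h1'.trans h2'.symm)
  constructor
  · intro x
    constructor
    · exact key x ⟨1, h1⟩ x (by simpa using H.one_mem)
    · exact key ⟨1, h1⟩ x x (by simpa using H.one_mem)
  · intro a b
    obtain ⟨s, ⟨hsS, hsH⟩, hs⟩ := huniq ((b : G) * (a : G)⁻¹)
    refine ⟨⟨s, hsS⟩, ?_, ?_⟩
    · apply key
      have : ((s * a * (b : G)⁻¹)⁻¹ : G) ∈ H := by
        convert hsH using 1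
        group
      simpa using (inv_mem this : (s * (a : G) * (b : G)⁻¹)⁻¹⁻¹ ∈ H)
    · intro X hX
      apply Subtype.ext
      apply hs X ⟨X.2, ?_⟩
      have h := hop X a
      rw [hX] at h
      have : (((X : G) * a * (b : G)⁻¹)⁻¹ : G) ∈ H := inv_mem h
      convert this using 1
      group
end

section
/- Let G be a finite group and H a core-free subgroup contained in a normal subgroup N of G such that the index of H in N is 2. Then N is an elementary abelian 2-group, i.e., N is abelian and every element of N has order dividing 2. -/
/-- If `G` is finite, `H` is core-free and contained in a normal
subgroup `N` with `[N : H] = 2`, then `N` is an elementary abelian 2-group. -/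
theorem stmt6 {G : Type*} [Group G] [Finite G] (H N : Subgroup G)
    (hHN : H ≤ N) (hN : N.Normal)
    (hcf : H.normalCore = ⊥)
    (hindex : H.relIndex N = 2) :
    (∀ a ∈ N, ∀ b ∈ N, a * b = b * a) ∧ (∀ a ∈ N, a ^ 2 = 1) := by
  have hsq : ∀ a ∈ N, a ^ 2 = 1 := by
    intro a ha
    have hmem : a ^ 2 ∈ H.normalCore := by
      intro g
      have hm : g * a * g⁻¹ ∈ N := hN.conj_mem a ha g
      have h2 : ((⟨g * a * g⁻¹, hm⟩ : N) : G) ^ 2 ∈ H := by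
        have := Subgroup.sq_mem_of_index_two (H := H.subgroupOf N) hindex
          ⟨g * a * g⁻¹, hm⟩
        simpa [Subgroup.mem_subgroupOf] using this
      have : (g * a * g⁻¹) ^ 2 = g * a ^ 2 * g⁻¹ := by
        simp [sq, mul_assoc]
      rwa [this] at h2
    rw [hcf] at hmem
    simpa using hmem
  refine ⟨fun a ha b hb => ?_, hsq⟩
  have hab := hsq (a * b) (N.mul_mem ha hb)
  have ha2 := hsq a ha
  have hb2 := hsq b hb
  have hia : a⁻¹ = a := by
    rw [← mul_eq_one_iff_inv_eq]; rw [← sq]; exact ha2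
  have hib : b⁻¹ = b := by
    rw [← mul_eq_one_iff_inv_eq]; rw [← sq]; exact hb2
  have hiab : (a * b)⁻¹ = a * b := by
    rw [← mul_eq_one_iff_inv_eq, ← sq]; exact hab
  calc a * b = (a * b)⁻¹ := hiab.symm
    _ = b⁻¹ * a⁻¹ := by rw [mul_inv_rev]
    _ = b * a := by rw [hia, hib]
end

section
/- Let S be a finite right loop (a finite set with binary operation ∘, two-sided identity 1, and unique right division) with a two-element invariant sub right loop T = {1, t} such that the quotient S/T is a group. Then for all x, y, z ∈ S, either f(y,z)(x) = x or f(y,z)(x) = t ∘ x, where f(y,z)(x) is the unique solution of X ∘ (y ∘ z) = (x ∘ y) ∘ z. -/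
/-- If a finite right loop `S` has a two-element invariant sub
right loop `T = {1, t}` (the classes `T ∘ x = {x, t ∘ x}` form a congruence)
such that the quotient `S/T` is a group (in particular associative), then for
all `x, y, z`, `f(y,z)(x)` is `x` or `t ∘ x`, where `f(y,z)(x)` is the unique
solution of `X ∘ (y∘z) = (x∘y)∘z`. -/
theorem stmt12 {S : Type*} [Fintype S] (op : S → S → S) (one t : S)
    (hone : ∀ x : S, op x one = x ∧ op one x = x)
    (hdiv : ∀ a b : S, ∃! x : S, op x a = b)
    (ht : t ≠ one) (htt : op t t = one)
    (Tc : S → Set S) (hTc : ∀ x : S, Tc x = {x, op t x})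
    (hclass : ∀ x y : S, y ∈ Tc x → Tc y = Tc x)
    (hcong : ∀ x x' y y' : S, Tc x = Tc x' → Tc y = Tc y' →
      Tc (op x y) = Tc (op x' y'))
    (hgrp : ∀ x y z : S, Tc (op x (op y z)) = Tc (op (op x y) z))
    (f : S → S → S → S)
    (hf : ∀ y z x : S, op (f y z x) (op y z) = op (op x y) z) :
    ∀ y z x : S, f y z x = x ∨ f y z x = op t x := by
  intro y z x
  have cancel : ∀ a b c : S, op a c = op b c → a = b := by
    intro a b c h
    obtain ⟨u, hu, huniq⟩ := hdiv c (op b c)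
    exact (huniq a h).trans (huniq b rfl).symm
  set c := op y z with hc
  set a := f y z x with ha
  have h1 : op a c = op (op x y) z := hf y z x
  have hmem : op a c ∈ Tc (op x c) := by
    have e1 : Tc (op a c) = Tc (op x c) := by
      rw [h1, ← hgrp x y z]
    rw [← e1, hTc]; left; rfl
  have htx : op (op t x) c ∈ Tc (op x c) := by
    have e2 : Tc (op (op t x) c) = Tc (op t (op x c)) := (hgrp t x c).symm
    have e3 : Tc (op t (op x c)) = Tc (op x c) := by
      apply hclass
      rw [hTc]; right; rfl
    rw [← e3, ← e2, hTc]; left; rfl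
  have hne : op x c ≠ op (op t x) c := by
    intro h
    have hx : x = op t x := cancel x (op t x) c h
    have : t = one := by
      apply cancel t one x
      rw [(hone x).2, ← hx]
    exact ht this
  rw [hTc] at hmem htx
  have hv : op (op t x) c = op t (op x c) := by
    rcases htx with h | h
    · exact absurd h hne.symm
    · exact h
  rcases hmem with h | h
  · exact Or.inl (cancel a x c h)
  · refine Or.inr (cancel a (op t x) c ?_)
    rw [h, hv]
end

section
/- Let S be a finite right loop with a two-element invariant sub right loop T = {1, t} such that S/T is a group. Then each map f(y,z) (where f(y,z)(x) solves X ∘ (y∘z) = (x∘y)∘z) is a product of disjoint transpositions of the form (x, t ∘ x); in particular f(y,z)² is the identity permutation of S. -/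
/-- Same setup as Statement 12: each `f(y,z)` is a product of
disjoint transpositions of the form `(x, t ∘ x)`; in particular `f(y,z)² = id`. -/
theorem stmt13 {S : Type*} [Fintype S] (op : S → S → S) (one t : S)
    (hone : ∀ x : S, op x one = x ∧ op one x = x)
    (hdiv : ∀ a b : S, ∃! x : S, op x a = b)
    (ht : t ≠ one) (htt : op t t = one)
    (Tc : S → Set S) (hTc : ∀ x : S, Tc x = {x, op t x})
    (hclass : ∀ x y : S, y ∈ Tc x → Tc y = Tc x)
    (hcong : ∀ x x' y y' : S, Tc x = Tc x' → Tc y = Tc y' →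
      Tc (op x y) = Tc (op x' y'))
    (hgrp : ∀ x y z : S, Tc (op x (op y z)) = Tc (op (op x y) z))
    (f : S → S → S → S)
    (hf : ∀ y z x : S, op (f y z x) (op y z) = op (op x y) z) :
    (∀ y z x : S, f y z x = x ∨ (f y z x = op t x ∧ f y z (op t x) = x)) ∧
    (∀ y z x : S, f y z (f y z x) = x) := by
  have cancel : ∀ a b c : S, op a c = op b c → a = b := by
    intro a b c h
    obtain ⟨x, hx, hu⟩ := hdiv c (op b c)
    exact (hu a h).trans (hu b rfl).symm
  have htx : ∀ x : S, op t x ≠ x := by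
    intro x h
    exact ht (cancel t one x (by rw [h, (hone x).2]))
  have hTtx : ∀ x : S, Tc (op t x) = Tc x := by
    intro x
    apply hclass
    rw [hTc]
    right; rfl
  have hkey : ∀ x w : S, op (op t x) w = op t (op x w) := by
    intro x w
    have h1 : Tc (op (op t x) w) = Tc (op x w) := hcong _ _ _ _ (hTtx x) rfl
    have hm : op (op t x) w ∈ Tc (op x w) := by
      rw [← h1, hTc]; left; rfl
    rw [hTc] at hm
    rcases hm with h | h
    · exact absurd (cancel _ _ _ h) (htx x)
    · exact h
  have httx : ∀ x : S, op t (op t x) = x := by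
    intro x
    have h := hkey t x
    rw [htt, (hone x).2] at h
    exact h.symm
  have dich : ∀ y z x : S, f y z x = x ∨ f y z x = op t x := by
    intro y z x
    have h1 : op (f y z x) (op y z) ∈ Tc (op x (op y z)) := by
      rw [hgrp, hf, hTc]; left; rfl
    rw [hTc] at h1
    rcases h1 with h | h
    · exact Or.inl (cancel _ _ _ h)
    · right
      rw [← hkey] at h
      exact cancel _ _ _ h
  have part1 : ∀ y z x : S, f y z x = x ∨ (f y z x = op t x ∧ f y z (op t x) = x) := by
    intro y z x
    rcases dich y z x with h | h
    · exact Or.inl h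
    · right
      refine ⟨h, ?_⟩
      rcases dich y z (op t x) with h2 | h2
      · exfalso
        have e1 : op (op t x) (op y z) = op (op x y) z := by rw [← h, hf]
        have e2 : op (op t x) (op y z) = op (op (op t x) y) z := by
          conv_lhs => rw [← h2]
          rw [hf]
        exact htx x (cancel _ _ _ (cancel _ _ _ (e2.symm.trans e1)))
      · rw [h2, httx]
  refine ⟨part1, ?_⟩
  intro y z x
  rcases part1 y z x with h | ⟨h1, h2⟩
  · rw [h, h]
  · rw [h1, h2]
end

section
/- Let S be a finite right loop with a two-element invariant sub right loop T = {1, t} such that S/T is a group. Then the group torsion G_S = ⟨ f(y,z) | y, z ∈ S ⟩ ≤ Sym(S) is an elementary abelian 2-group. -/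
/-- Same setup: the group torsion
`G_S = ⟨ f(y,z) | y, z ∈ S ⟩ ≤ Sym(S)` is an elementary abelian 2-group. -/
theorem stmt14 {S : Type*} [Fintype S] (op : S → S → S) (one t : S)
    (hone : ∀ x : S, op x one = x ∧ op one x = x)
    (hdiv : ∀ a b : S, ∃! x : S, op x a = b)
    (ht : t ≠ one) (htt : op t t = one)
    (Tc : S → Set S) (hTc : ∀ x : S, Tc x = {x, op t x})
    (hclass : ∀ x y : S, y ∈ Tc x → Tc y = Tc x)
    (hcong : ∀ x x' y y' : S, Tc x = Tc x' → Tc y = Tc y' →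
      Tc (op x y) = Tc (op x' y'))
    (hgrp : ∀ x y z : S, Tc (op x (op y z)) = Tc (op (op x y) z))
    (F : S → S → Equiv.Perm S)
    (hF : ∀ y z x : S, op (F y z x) (op y z) = op (op x y) z) :
    letI GS : Subgroup (Equiv.Perm S) :=
      Subgroup.closure {p : Equiv.Perm S | ∃ y z : S, p = F y z}
    (∀ g ∈ GS, g * g = 1) ∧ (∀ g ∈ GS, ∀ h ∈ GS, g * h = h * g) := by
  set GS : Subgroup (Equiv.Perm S) := Subgroup.closure {p : Equiv.Perm S | ∃ y z : S, p = F y z} with hGS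
  have hn : ∀ x : S, op t x ≠ x := by
    intro x h
    obtain ⟨u, hu, huniq⟩ := hdiv x x
    exact ht ((huniq t h).trans (huniq one (hone x).2).symm)
  have hmem : ∀ x : S, op t x ∈ Tc x := by
    intro x; rw [hTc]; right; rfl
  have hinv : ∀ x : S, op t (op t x) = x := by
    intro x
    have h1 : Tc (op t x) = Tc x := hclass x (op t x) (hmem x)
    have h2 : op t (op t x) ∈ Tc x := h1 ▸ hmem (op t x)
    rw [hTc] at h2
    rcases h2 with h | h
    · exact h
    · exact absurd h (hn (op t x))
  have hgen : ∀ y z x : S, F y z x = x ∨ F y z x = op t x := by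
    intro y z x
    set a := F y z x with ha
    have h1 : Tc (op a (op y z)) = Tc (op x (op y z)) := by
      rw [hF y z x, hgrp]
    have h2 : op a (op y z) ∈ Tc (op x (op y z)) := by
      rw [← h1, hTc]; left; rfl
    rw [hTc] at h2
    rcases h2 with h | h
    · left
      obtain ⟨u, hu, huniq⟩ := hdiv (op y z) (op x (op y z))
      exact (huniq a h).trans (huniq x rfl).symm
    · right
      have h3 : Tc (op (op t x) (op y z)) = Tc (op x (op y z)) :=
        hcong _ _ _ _ (hclass x (op t x) (hmem x)) rfl
      have h4 : op (op t x) (op y z) ∈ Tc (op x (op y z)) := by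
        rw [← h3, hTc]; left; rfl
      rw [hTc] at h4
      rcases h4 with h' | h'
      · obtain ⟨u, hu, huniq⟩ := hdiv (op y z) (op x (op y z))
        exact absurd ((huniq _ h').trans (huniq x rfl).symm) (hn x)
      · obtain ⟨u, hu, huniq⟩ := hdiv (op y z) (op t (op x (op y z)))
        exact (huniq a h).trans (huniq (op t x) h').symm
  -- the subgroup of permutations moving each point within its T-class
  let P : Subgroup (Equiv.Perm S) :=
    { carrier := {p : Equiv.Perm S | ∀ x : S, p x = x ∨ p x = op t x}
      one_mem' := by intro x; left; rfl
      mul_mem' := by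
        intro p q hp hq x
        have : (p * q) x = p (q x) := rfl
        rw [this]
        rcases hq x with h | h
        · rw [h]; exact hp x
        · rw [h]
          rcases hp (op t x) with h' | h'
          · right; exact h'
          · left; rw [h', hinv]
      inv_mem' := by
        intro p hp y
        rcases hp (p⁻¹ y) with h | h
        · left; exact h.symm.trans (p.apply_symm_apply y)
        · right
          have hy : y = op t (p⁻¹ y) := (p.apply_symm_apply y).symm.trans h
          calc p⁻¹ y = op t (op t (p⁻¹ y)) := (hinv _).symm
            _ = op t y := by rw [← hy] }
  have hPinv : ∀ p ∈ P, ∀ x : S, p (p x) = x := by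
    intro p hp x
    rcases hp x with h | h
    · rw [h, h]
    · rcases hp (op t x) with h' | h'
      · exact absurd (p.injective (h.trans h'.symm)).symm (hn x)
      · rw [h, h', hinv]
  have hPcomm : ∀ p ∈ P, ∀ q ∈ P, ∀ x : S, p (q x) = q (p x) := by
    intro p hp q hq x
    rcases hq x with h | h
    · rcases hp x with h' | h'
      · rw [h, h', h]
      · rw [h, h']
        rcases hq (op t x) with h'' | h''
        · rw [h'']
        · have : q (op t x) = q x := (h''.trans (hinv x)).trans h.symm
          exact absurd (q.injective this) (hn x)
    · rcases hp x with h' | h'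
      · rw [h, h']
        rcases hp (op t x) with h'' | h''
        · rw [h'', h]
        · have : p (op t x) = p x := (h''.trans (hinv x)).trans h'.symm
          exact absurd (p.injective this) (hn x)
      · rw [h, h']
        rcases hp (op t x) with h'' | h''
        · exact absurd (p.injective (h'.trans h''.symm)).symm (hn x)
        · rcases hq (op t x) with h3 | h3
          · exact absurd (q.injective (h.trans h3.symm)).symm (hn x)
          · rw [h'', h3, hinv]
  have hle : GS ≤ P := by
    apply Subgroup.closure_le P |>.mpr
    intro p hp
    obtain ⟨y, z, rfl⟩ := hp
    exact fun x => hgen y z x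
  constructor
  · intro g hg
    have hgP := hle hg
    ext x
    simp only [Equiv.Perm.coe_mul, Function.comp_apply, Equiv.Perm.coe_one, id_eq]
    exact hPinv g hgP x
  · intro g hg h hh
    have hgP := hle hg
    have hhP := hle hh
    ext x
    simp only [Equiv.Perm.coe_mul, Function.comp_apply]
    exact hPcomm g hgP h hhP x
end
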